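/- arXiv:math/0407498 — 2 statements merged into one kernel-verified Lean document; each statement's English description precedes it below -/
import Mathlib

section
/- Let λ be a regular uncountable cardinal. Suppose G*₀ ⊆ Q⁰_λ is (<ℵ₁)-directed with respect to ≤⁰ and fil(G*₀) is a weakly reasonable ultrafilter on λ. Then F₀ = {f_p : p ∈ G*₀} is a dominating family in ^λλ. In particular, |G*₀| ≥ 𝔡_λ. -/
open Set Ordinal Cardinal

noncomputable section

namespace Sh830

/-- `D` is a (proper) ultrafilter on the set `Z` of ordinals. -/
def IsUltraOn (Z : Set Ordinal) (D : Set (Set Ordinal)) : Prop :=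
  (∀ A ∈ D, A ⊆ Z) ∧ Z ∈ D ∧ ∅ ∉ D ∧
  (∀ A B : Set Ordinal, A ∈ D → A ⊆ B → B ⊆ Z → B ∈ D) ∧
  (∀ A B : Set Ordinal, A ∈ D → B ∈ D → A ∩ B ∈ D) ∧
  (∀ A : Set Ordinal, A ⊆ Z → A ∈ D ∨ Z \ A ∈ D)

/-- `D` is an ultrafilter on `λ`, where `λ` is identified with the set of ordinals `< λ`. -/
def IsUltrafilterOn (l : Ordinal) (D : Set (Set Ordinal)) : Prop :=
  IsUltraOn (Iio l) D

/-- `D` is uniform: every member of `D` has cardinality `λ`. -/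
def IsUniformOn (l : Ordinal) (D : Set (Set Ordinal)) : Prop :=
  ∀ A ∈ D, #A = #(Iio l)

/-- `C` is a club (closed and unbounded) subset of `λ`. -/
def IsClubIn (C : Set Ordinal) (l : Ordinal) : Prop :=
  C ⊆ Iio l ∧
  (∀ δ, δ < l → δ ≠ 0 → sSup (C ∩ Iio δ) = δ → δ ∈ C) ∧
  (∀ α, α < l → ∃ β ∈ C, α < β)

/-- The quotient `D/f = {A ⊆ λ : f⁻¹(A) ∈ D}`. -/
def quotUF (l : Ordinal) (D : Set (Set Ordinal)) (f : Ordinal → Ordinal) :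
    Set (Set Ordinal) :=
  {A | A ⊆ Iio l ∧ Iio l ∩ f ⁻¹' A ∈ D}

/-- The family `F_λ` of all non-decreasing functions `λ → λ` with unbounded range. -/
def Flam (l : Ordinal) : Set (Ordinal → Ordinal) :=
  {f | (∀ α, α < l → f α < l) ∧ (∀ α β, α ≤ β → β < l → f α ≤ f β) ∧
    (∀ γ, γ < l → ∃ α, α < l ∧ γ ≤ f α)}

/-- `D` is weakly reasonable: for every `f ∈ F_λ` there is a club `C` of `λ` with
`∪ {[δ, δ + f δ) : δ ∈ C} ∉ D`. -/
def WeaklyReasonable (l : Ordinal) (D : Set (Set Ordinal)) : Prop :=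
  ∀ f ∈ Flam l, ∃ C, IsClubIn C l ∧ (⋃ δ ∈ C, Ico δ (δ + f δ)) ∉ D

/-- The order type of a set of ordinals: the (unique) ordinal order-isomorphic to it. -/
def setOtp (S : Set Ordinal) : Ordinal :=
  sInf {o : Ordinal | Nonempty (Iio o ≃o S)}

/-- `min(β/E)`: the least element of the `E`-equivalence class of `β`. -/
def minClass (E : Ordinal → Ordinal → Prop) (β : Ordinal) : Ordinal :=
  sInf {γ | E γ β}

/-- The function `f_E` associated with an equivalence relation `E`:
`f_E α = otp {β < α : β = min(β/E) < min(α/E)}`. -/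
def fEquiv (E : Ordinal → Ordinal → Prop) (α : Ordinal) : Ordinal :=
  setOtp {β | β < α ∧ β = minClass E β ∧ minClass E β < minClass E α}

/-- The equivalence relation `E_C` associated with a club `C`:
`α E_C β` iff `(∀ γ ∈ C)(α < γ ↔ β < γ)`. -/
def clubRel (C : Set Ordinal) (α β : Ordinal) : Prop :=
  ∀ γ ∈ C, (α < γ ↔ β < γ)

/-- The quotient `D/C = D/E_C = D/f_{E_C}`. -/
def quotClub (l : Ordinal) (D : Set (Set Ordinal)) (C : Set Ordinal) :
    Set (Set Ordinal) :=
  quotUF l D (fEquiv (clubRel C))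

/-- A strategy for Odd in the game `⅁_D`: given `i < λ`, Even's moves `β_j = α_{2j}`
for `j ≤ i`, and Odd's previous moves `γ_j = α_{2j+1}` for `j < i`, it produces
Odd's move `γ_i = α_{2i+1}`. -/
def OddStr : Type 1 :=
  (i : Ordinal) → ((j : Ordinal) → j ≤ i → Ordinal) → ((j : Ordinal) → j < i → Ordinal) → Ordinal

/-- A legal position of the game just before Odd's `i`-th move. -/
def IsPosition (l i : Ordinal) (β γ : Ordinal → Ordinal) : Prop :=
  i < l ∧ (∀ j, j ≤ i → β j < l) ∧ (∀ j, j < i → β j < γ j ∧ γ j < l) ∧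
  (∀ j, j < i → γ j < β (j + 1)) ∧
  (∀ j, j ≤ i → Order.IsSuccLimit j → β j = sSup (γ '' Iio j))

/-- A complete legal play of the game of length `λ`: `β i` is `α_{2i}`
(Even's move) and `γ i` is `α_{2i+1}` (Odd's move). -/
def IsPlay (l : Ordinal) (β γ : Ordinal → Ordinal) : Prop :=
  (∀ i, i < l → β i < l ∧ γ i < l) ∧ (∀ i, i < l → β i < γ i) ∧
  (∀ i, i + 1 < l → γ i < β (i + 1)) ∧
  (∀ i, i < l → Order.IsSuccLimit i → β i = sSup (γ '' Iio i))

/-- `st` is a legal strategy for Odd: at every legal position it produces a legal move,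
i.e. an ordinal `α_{2i+1}` with `α_{2i} < α_{2i+1} < λ`. -/
def IsOddStrategy (l : Ordinal) (st : OddStr) : Prop :=
  ∀ i β γ, IsPosition l i β γ →
    β i < st i (fun j _ => β j) (fun j _ => γ j) ∧
    st i (fun j _ => β j) (fun j _ => γ j) < l

/-- The play `(β, γ)` follows the strategy `st` of Odd. -/
def FollowsOdd (l : Ordinal) (st : OddStr) (β γ : Ordinal → Ordinal) : Prop :=
  ∀ i, i < l → γ i = st i (fun j _ => β j) (fun j _ => γ j)

/-- `st` is winning for Odd in `⅁_D`: in every play following it, Even loses, i.e.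
`∪ {[α_{2i+1}, α_{2i+2}) : i < λ} ∉ D`. -/
def OddWinsWith (l : Ordinal) (D : Set (Set Ordinal)) (st : OddStr) : Prop :=
  ∀ β γ, IsPlay l β γ → FollowsOdd l st β γ →
    (⋃ i ∈ Iio l, Ico (γ i) (β (i + 1))) ∉ D

/-- The next element of `C` above `δ`, i.e. `min (C \ (δ+1))`. -/
def nxt (C : Set Ordinal) (δ : Ordinal) : Ordinal := sInf (C ∩ Ioi δ)

/-- A condition of the forcing notion `Q¹_λ`; here `Z^p_δ = [δ, nxt C δ)` and
`d δ` is the ultrafilter `d^p_δ` on `Z^p_δ`. -/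
structure Q1 (l : Ordinal) where
  γ : Ordinal
  C : Set Ordinal
  d : Ordinal → Set (Set Ordinal)
  γ_lt : γ < l
  club : IsClubIn C l
  lim : ∀ δ ∈ C, Order.IsSuccLimit δ
  ultra : ∀ δ ∈ C, IsUltraOn (Ico δ (nxt C δ)) (d δ)

/-- The order of `Q¹_λ`. -/
def Q1le (l : Ordinal) (p q : Q1 l) : Prop :=
  p.γ ≤ q.γ ∧ p.C ∩ Iio p.γ ⊆ q.C ∧ q.C ⊆ p.C ∧
  ∀ δ ∈ q.C, ∀ A ∈ q.d δ,
    ∃ ζ ∈ p.C ∩ Ico δ (nxt q.C δ), A ∩ Ico ζ (nxt p.C ζ) ∈ p.d ζ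

/-- A condition of the forcing notion `Q⁰_λ`; here `Z^p_δ = [δ, nxt C δ)` and
`d δ` is the ultrafilter `d^p_δ` on `Z^p_δ`. -/
structure Q0 (l : Ordinal) where
  C : Set Ordinal
  d : Ordinal → Set (Set Ordinal)
  club : IsClubIn C l
  lim : ∀ δ ∈ C, Order.IsSuccLimit δ
  ultra : ∀ δ ∈ C, IsUltraOn (Ico δ (nxt C δ)) (d δ)

/-- The order relation of `Q⁰_λ`, on the underlying data. -/
def Q0leAux (Cp : Set Ordinal) (dp : Ordinal → Set (Set Ordinal))
    (Cq : Set Ordinal) (dq : Ordinal → Set (Set Ordinal)) : Prop :=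
  Cq ⊆ Cp ∧ ∀ δ ∈ Cq, ∀ A ∈ dq δ,
    ∃ ζ ∈ Cp ∩ Ico δ (nxt Cq δ), A ∩ Ico ζ (nxt Cp ζ) ∈ dp ζ

/-- The order `≤_{Q⁰_λ}`. -/
def Q0le (l : Ordinal) (p q : Q0 l) : Prop := Q0leAux p.C p.d q.C q.d

/-- The relation `≤*_{Q⁰_λ}`: for some `α < λ` the restrictions beyond `α` are
`≤_{Q⁰_λ}`-related. -/
def Q0leStar (l : Ordinal) (p q : Q0 l) : Prop :=
  ∃ α, α < l ∧ Q0leAux (p.C \ Iio α) p.d (q.C \ Iio α) q.d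

/-- `fil(p) = {A ⊆ λ : (∃ ε < λ)(∀ δ ∈ C^p \ ε)(A ∩ Z^p_δ ∈ d^p_δ)}`. -/
def fil (l : Ordinal) (p : Q0 l) : Set (Set Ordinal) :=
  {A | A ⊆ Iio l ∧ ∃ ε, ε < l ∧ ∀ δ ∈ p.C, ε ≤ δ → A ∩ Ico δ (nxt p.C δ) ∈ p.d δ}

/-- `fil(G*) = ∪ {fil(p) : p ∈ G*}`. -/
def filG (l : Ordinal) (G : Set (Q0 l)) : Set (Set Ordinal) := ⋃ p ∈ G, fil l p

/-- The relation `≤⁰`: `p ≤⁰ q` iff `fil(p) ⊆ fil(q)`. -/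
def le0 (l : Ordinal) (p q : Q0 l) : Prop := fil l p ⊆ fil l q

/-- `G` is `(<c)`-directed with respect to `le`: `G` is nonempty and every subset of `G`
of cardinality `< c` has an upper bound in `G`. -/
def DirLtOn (l : Ordinal) (c : Cardinal.{1}) (G : Set (Q0 l))
    (le : Q0 l → Q0 l → Prop) : Prop :=
  G.Nonempty ∧ ∀ S : Set (Q0 l), S ⊆ G → #S < c → ∃ r ∈ G, ∀ p ∈ S, le p r

/-- The sum `⊕^e {d_x : x ∈ X}` of ultrafilters `d x` on `Z x` along an ultrafilter `e`
on `X`. -/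
def ufSum (X : Set Ordinal) (e : Set (Set Ordinal)) (Z : Ordinal → Set Ordinal)
    (d : Ordinal → Set (Set Ordinal)) : Set (Set Ordinal) :=
  {A | A ⊆ (⋃ x ∈ X, Z x) ∧ {x | x ∈ X ∧ Z x ∩ A ∈ d x} ∈ e}

/-- The function `f_p` associated with `p ∈ Q⁰_λ`: `f_p α` is the member of `C^p` with
`otp (C^p ∩ f_p α) = ω·α + ω`. -/
def fP (l : Ordinal) (p : Q0 l) (α : Ordinal) : Ordinal :=
  sInf {β | β ∈ p.C ∧ setOtp (p.C ∩ Iio β) = Ordinal.omega0 * α + Ordinal.omega0}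

/-- The space `^λλ` (functions below `l` matter). -/
def funSp (l : Ordinal) : Set (Ordinal → Ordinal) := {f | ∀ α, α < l → f α < l}

/-- `F` is a dominating family in `^λλ`. -/
def IsDominating (l : Ordinal) (F : Set (Ordinal → Ordinal)) : Prop :=
  ∀ g ∈ funSp l, ∃ f ∈ F, ∃ α, α < l ∧ ∀ β, α < β → β < l → g β < f β

/-- The dominating number `𝔡_λ`. -/
def dLam (l : Ordinal) : Cardinal.{1} :=
  sInf {c : Cardinal | ∃ F : Set (Ordinal → Ordinal),
    F ⊆ funSp l ∧ IsDominating l F ∧ #F = c}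

/-- `S` is non-stationary in `λ`. -/
def NonStatIn (S : Set Ordinal) (l : Ordinal) : Prop :=
  ∃ C, IsClubIn C l ∧ S ∩ C = ∅

/-- `F` is a club-dominating family in `^λλ`. -/
def IsClubDominating (l : Ordinal) (F : Set (Ordinal → Ordinal)) : Prop :=
  ∀ g ∈ funSp l, ∃ f ∈ F, NonStatIn {β | β < l ∧ f β ≤ g β} l

/-- The club-dominating number `𝔡_{cl(λ)}`. -/
def dClubLam (l : Ordinal) : Cardinal.{1} :=
  sInf {c : Cardinal | ∃ F : Set (Ordinal → Ordinal),
    F ⊆ funSp l ∧ IsClubDominating l F ∧ #F = c}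

/-- `A` is a nowhere dense subset of the space `^λλ` (with basic open sets determined
by initial segments). -/
def IsNwd (l : Ordinal) (A : Set (Ordinal → Ordinal)) : Prop :=
  A ⊆ funSp l ∧
  ∀ s ∈ funSp l, ∀ α, α < l → ∃ t ∈ funSp l, ∃ α', α ≤ α' ∧ α' < l ∧
    (∀ β, β < α → t β = s β) ∧ ∀ f ∈ funSp l, (∀ β, β < α' → f β = t β) → f ∉ A

/-- `A` belongs to the ideal `M^λ_{λ,λ}`, the `(<λ)`-complete ideal generated by the
nowhere dense subsets of `^λλ`. -/
def InMIdeal (l : Ordinal) (A : Set (Ordinal → Ordinal)) : Prop :=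
  A ⊆ funSp l ∧ ∃ θ, θ < l ∧ ∃ B : Ordinal → Set (Ordinal → Ordinal),
    (∀ i, i < θ → IsNwd l (B i)) ∧ A ⊆ ⋃ i ∈ Iio θ, B i

/-- The covering number `cov(M^λ_{λ,λ})`. -/
def covM (l : Ordinal) : Cardinal.{1} :=
  sInf {c : Cardinal | ∃ S : Set (Set (Ordinal → Ordinal)),
    (∀ A ∈ S, InMIdeal l A) ∧ funSp l ⊆ ⋃₀ S ∧ #S = c}

/-! ### Auxiliary lemmas for the proof of `stmt17` -/

section AuxProof

variable {κ : Cardinal.{0}}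

theorem iio_orderIso_eq {a b : Ordinal} (e : Set.Iio a ≃o Set.Iio b) : a = b := by
  have e2 : a.ToType ≃o b.ToType :=
    ((Ordinal.ToType.mk).symm.trans e).trans (Ordinal.ToType.mk)
  have h : @Ordinal.type a.ToType (· < ·) isWellOrder_lt
      = @Ordinal.type b.ToType (· < ·) isWellOrder_lt :=
    (@Ordinal.type_eq _ _ _ _ isWellOrder_lt isWellOrder_lt).mpr ⟨e2.toRelIsoLT⟩
  rwa [Ordinal.type_toType, Ordinal.type_toType] at h

theorem setOtp_eq {S : Set Ordinal} {a : Ordinal} (h : Nonempty (Iio a ≃o S)) :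
    setOtp S = a := by
  refine le_antisymm (csInf_le (OrderBot.bddBelow _) h) (le_csInf ⟨a, h⟩ fun b hb => ?_)
  obtain ⟨e1⟩ := h
  obtain ⟨e2⟩ := hb
  exact (iio_orderIso_eq (e1.trans e2.symm)).le

lemma add_lt_l (h : ℵ₀ < κ) {a b : Ordinal} (ha : a < κ.ord) (hb : b < κ.ord) :
    a + b < κ.ord := by
  rw [Cardinal.lt_ord, Ordinal.card_add]
  exact Cardinal.add_lt_of_lt h.le (Cardinal.lt_ord.1 ha) (Cardinal.lt_ord.1 hb)

lemma mul_lt_l (h : ℵ₀ < κ) {a b : Ordinal} (ha : a < κ.ord) (hb : b < κ.ord) :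
    a * b < κ.ord := by
  rw [Cardinal.lt_ord, Ordinal.card_mul]
  exact Cardinal.mul_lt_of_lt h.le (Cardinal.lt_ord.1 ha) (Cardinal.lt_ord.1 hb)

lemma omega0_lt_l (h : ℵ₀ < κ) : (Ordinal.omega0 : Ordinal) < κ.ord := by
  rw [Cardinal.lt_ord, Ordinal.card_omega0]; exact h

lemma zero_lt_l (h : ℵ₀ < κ) : (0 : Ordinal) < κ.ord :=
  lt_trans Ordinal.omega0_pos (omega0_lt_l h)

lemma one_lt_l (h : ℵ₀ < κ) : (1 : Ordinal) < κ.ord :=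
  lt_trans Ordinal.one_lt_omega0 (omega0_lt_l h)

lemma bsup_lt_l (hreg : κ.IsRegular) {o : Ordinal} (ho : o < κ.ord)
    {f : ∀ a < o, Ordinal} (hf : ∀ i hi, f i hi < κ.ord) : Ordinal.bsup o f < κ.ord :=
  Ordinal.bsup_lt_ord (by rw [hreg.cof_eq]; exact Cardinal.lt_ord.1 ho) hf

lemma iSup_nat_lt_l (hreg : κ.IsRegular) (hunc : ℵ₀ < κ) {f : ℕ → Ordinal}
    (hf : ∀ n, f n < κ.ord) : (⨆ n, f n) < κ.ord :=
  Ordinal.iSup_lt_ord (a := κ.ord) (by rw [Cardinal.mk_nat, hreg.cof_eq]; exact hunc) hf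

lemma bdd_range_nat {f : ℕ → Ordinal} (hf : ∀ n, f n < κ.ord) : BddAbove (Set.range f) :=
  ⟨κ.ord, by rintro x ⟨n, rfl⟩; exact (hf n).le⟩

/-- `sup1 F x` is a strict upper bound for `F ξ`, `ξ ≤ x`. -/
def sup1 (F : Ordinal → Ordinal) (x : Ordinal) : Ordinal :=
  Ordinal.bsup (x + 1) (fun ξ _ => F ξ + 1)

lemma lt_sup1 {F : Ordinal → Ordinal} {x ξ : Ordinal} (h : ξ ≤ x) : F ξ < sup1 F x := by
  have h1 : ξ < x + 1 := by rw [Ordinal.add_one_eq_succ, Order.lt_succ_iff]; exact h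
  have := Ordinal.le_bsup (fun ξ (_ : ξ < x + 1) => F ξ + 1) ξ h1
  have h2 : F ξ < F ξ + 1 := by rw [Ordinal.add_one_eq_succ]; exact Order.lt_succ _
  exact lt_of_lt_of_le h2 this

lemma sup1_lt_l (hreg : κ.IsRegular) (hunc : ℵ₀ < κ) {F : Ordinal → Ordinal} {x : Ordinal}
    (hx : x < κ.ord) (hF : ∀ ξ ≤ x, F ξ < κ.ord) : sup1 F x < κ.ord := by
  refine bsup_lt_l hreg (add_lt_l hunc hx (one_lt_l hunc)) fun i hi => ?_
  have hix : i ≤ x := by rwa [Ordinal.add_one_eq_succ, Order.lt_succ_iff] at hi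
  exact add_lt_l hunc (hF i hix) (one_lt_l hunc)

lemma sup1_mono {F : Ordinal → Ordinal} {x x' : Ordinal} (h : x ≤ x') :
    sup1 F x ≤ sup1 F x' :=
  Ordinal.bsup_le_iff.2 fun i hi =>
    Ordinal.le_bsup _ i (lt_of_lt_of_le hi (add_le_add_left h 1))

lemma nxt_spec {C : Set Ordinal} (hC : IsClubIn C κ.ord) {δ : Ordinal} (hδ : δ < κ.ord) :
    nxt C δ ∈ C ∧ δ < nxt C δ ∧ nxt C δ < κ.ord := by
  obtain ⟨β, hβC, hβ⟩ := hC.2.2 δ hδ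
  have hne : (C ∩ Ioi δ).Nonempty := ⟨β, hβC, hβ⟩
  have hmem := csInf_mem hne
  exact ⟨hmem.1, hmem.2, hC.1 hmem.1⟩

lemma nxt_mono {C : Set Ordinal} (hC : IsClubIn C κ.ord) {δ δ' : Ordinal} (h : δ ≤ δ')
    (hδ' : δ' < κ.ord) : nxt C δ ≤ nxt C δ' := by
  obtain ⟨β, hβC, hβ⟩ := hC.2.2 δ' hδ'
  exact csInf_le_csInf (OrderBot.bddBelow _) ⟨β, hβC, hβ⟩
    (Set.inter_subset_inter_right _ (fun x hx => lt_of_le_of_lt h hx))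

lemma nxt_le_of_mem {C : Set Ordinal} {δ x : Ordinal} (hx : x ∈ C) (hδx : δ < x) :
    nxt C δ ≤ x :=
  csInf_le (OrderBot.bddBelow _) ⟨hx, hδx⟩

lemma sSup_mem_club {C : Set Ordinal} (hC : IsClubIn C κ.ord) {x : Ordinal} (hx : x < κ.ord)
    (hne : (C ∩ Iic x).Nonempty) :
    sSup (C ∩ Iic x) ∈ C ∧ sSup (C ∩ Iic x) ≤ x := by
  set s := sSup (C ∩ Iic x) with hs
  have hub : ∀ y ∈ C ∩ Iic x, y ≤ s := fun y hy => le_csSup ⟨x, fun z hz => hz.2⟩ hy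
  have hsx : s ≤ x := csSup_le hne (fun y hy => hy.2)
  by_cases hmem : s ∈ C
  · exact ⟨hmem, hsx⟩
  · have hlt : ∀ y ∈ C ∩ Iic x, y < s := fun y hy =>
      lt_of_le_of_ne (hub y hy) (by rintro rfl; exact hmem hy.1)
    have hset : C ∩ Iio s = C ∩ Iic x := by
      ext z
      constructor
      · rintro ⟨hz, hzs⟩; exact ⟨hz, le_trans hzs.le hsx⟩
      · intro hz; exact ⟨hz.1, hlt z hz⟩
    have h0 : s ≠ 0 := by
      obtain ⟨y, hy⟩ := hne
      exact (lt_of_le_of_lt (show (0:Ordinal) ≤ y from zero_le) (hlt y hy)).ne'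
    have : s ∈ C := hC.2.1 s (lt_of_le_of_lt hsx hx) h0 (by rw [hset])
    exact ⟨this, hsx⟩

lemma club_iInter (hreg : κ.IsRegular) (hunc : ℵ₀ < κ) {Cs : ℕ → Set Ordinal}
    (h : ∀ n, IsClubIn (Cs n) κ.ord) : IsClubIn (⋂ n, Cs n) κ.ord := by
  refine ⟨(Set.iInter_subset Cs 0).trans (h 0).1, ?_, ?_⟩
  · intro δ hδ h0 hsup
    have hne : ((⋂ m, Cs m) ∩ Iio δ).Nonempty := by
      rcases Set.eq_empty_or_nonempty ((⋂ m, Cs m) ∩ Iio δ) with he | hne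
      · rw [he, csSup_empty] at hsup
        exact absurd hsup.symm h0
      · exact hne
    refine Set.mem_iInter.2 fun n => (h n).2.1 δ hδ h0 ?_
    have hsub : (⋂ m, Cs m) ∩ Iio δ ⊆ Cs n ∩ Iio δ :=
      Set.inter_subset_inter_left _ (Set.iInter_subset _ n)
    refine le_antisymm (csSup_le (hne.mono hsub) fun y hy => hy.2.le) ?_
    exact le_trans hsup.ge (csSup_le_csSup ⟨δ, fun z hz => hz.2.le⟩ hne hsub)
  · intro α hα
    set y : ℕ → Ordinal := fun k => Nat.rec (α + 1) (fun _ prev => ⨆ n, nxt (Cs n) prev) k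
      with hy
    have hy0 : y 0 = α + 1 := rfl
    have hysucc : ∀ k, y (k + 1) = ⨆ n, nxt (Cs n) (y k) := fun k => rfl
    have hylt : ∀ k, y k < κ.ord := by
      intro k
      induction k with
      | zero => rw [hy0]; exact add_lt_l hunc hα (one_lt_l hunc)
      | succ k ih =>
        rw [hysucc]
        exact iSup_nat_lt_l hreg hunc fun n => (nxt_spec (h n) ih).2.2
    have hstep : ∀ k n, y k < nxt (Cs n) (y k) ∧ nxt (Cs n) (y k) ≤ y (k + 1) := by
      intro k n
      refine ⟨(nxt_spec (h n) (hylt k)).2.1, ?_⟩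
      rw [hysucc]
      exact le_ciSup (bdd_range_nat fun n => (nxt_spec (h n) (hylt k)).2.2) n
    have hyinc : ∀ k, y k < y (k + 1) :=
      fun k => lt_of_lt_of_le (hstep k 0).1 (hstep k 0).2
    set Y := ⨆ k, y k with hY
    have hYlt : Y < κ.ord := iSup_nat_lt_l hreg hunc hylt
    have hyY : ∀ k, y k < Y :=
      fun k => lt_of_lt_of_le (hyinc k) (le_ciSup (bdd_range_nat hylt) (k + 1))
    have hYmem : ∀ n, Y ∈ Cs n := by
      intro n
      refine (h n).2.1 Y hYlt ?_ ?_
      · exact (lt_of_le_of_lt (show (0:Ordinal) ≤ _ from zero_le) (hyY 0)).ne'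
      · refine le_antisymm (csSup_le ⟨nxt (Cs n) (y 0), (nxt_spec (h n) (hylt 0)).1,
          lt_of_le_of_lt (hstep 0 n).2 (hyY 1)⟩ fun z hz => hz.2.le) ?_
        rw [hY]
        refine ciSup_le fun k => ?_
        have hmem : nxt (Cs n) (y k) ∈ Cs n ∩ Iio Y :=
          ⟨(nxt_spec (h n) (hylt k)).1, lt_of_le_of_lt (hstep k n).2 (hyY (k + 1))⟩
        exact le_trans (hstep k n).1.le (le_csSup ⟨Y, fun z hz => hz.2.le⟩ hmem)
    exact ⟨Y, Set.mem_iInter.2 hYmem, lt_of_lt_of_le (lt_of_lt_of_le (lt_add_one α) hy0.ge)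
      (hyY 0).le⟩

lemma club_inter (hreg : κ.IsRegular) (hunc : ℵ₀ < κ) {C₁ C₂ : Set Ordinal}
    (h1 : IsClubIn C₁ κ.ord) (h2 : IsClubIn C₂ κ.ord) : IsClubIn (C₁ ∩ C₂) κ.ord := by
  have h := club_iInter hreg hunc (Cs := fun n => if n = 0 then C₁ else C₂)
    (by intro n; cases n with
        | zero => simpa using h1
        | succ k => simpa using h2)
  have he : (⋂ n : ℕ, if n = 0 then C₁ else C₂) = C₁ ∩ C₂ := by
    ext x
    simp only [Set.mem_iInter, Set.mem_inter_iff]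
    constructor
    · intro hx
      have h0 := hx 0
      have h1' := hx 1
      simp at h0 h1'
      exact ⟨h0, h1'⟩
    · rintro ⟨hx1, hx2⟩ n
      cases n with
      | zero => simpa using hx1
      | succ k => simpa using hx2
  rwa [he] at h

lemma club_Iio (hunc : ℵ₀ < κ) : IsClubIn (Iio κ.ord) κ.ord := by
  refine ⟨le_refl _, fun δ hδ _ _ => hδ, fun α hα => ?_⟩
  exact ⟨α + 1, add_lt_l hunc hα (one_lt_l hunc), lt_add_one α⟩

lemma not_bddAbove_aux (C : Set Ordinal) (l : Ordinal) : ¬ BddAbove (C ∪ Ici l) := by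
  rintro ⟨b, hb⟩
  have hmem : max (b + 1) l ∈ C ∪ Ici l := Or.inr (Set.mem_Ici.2 (le_max_right _ _))
  have := hb hmem
  exact absurd (le_trans (le_max_left _ _) this)
    (not_le.2 (by rw [Ordinal.add_one_eq_succ]; exact Order.lt_succ b))

lemma enum_mem_lt (hreg : κ.IsRegular) (hunc : ℵ₀ < κ) {C : Set Ordinal}
    (hC : IsClubIn C κ.ord) :
    ∀ i < κ.ord, enumOrd (C ∪ Ici κ.ord) i ∈ C ∧ enumOrd (C ∪ Ici κ.ord) i < κ.ord := by
  have hs := not_bddAbove_aux C κ.ord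
  intro i
  induction i using Ordinal.induction with
  | h j IH =>
    intro hj
    have hb : Ordinal.bsup j (fun k _ => enumOrd (C ∪ Ici κ.ord) k + 1) < κ.ord :=
      bsup_lt_l hreg hj fun k hk =>
        add_lt_l hunc (IH k hk (hk.trans hj)).2 (one_lt_l hunc)
    obtain ⟨x, hxC, hxb⟩ := hC.2.2 _ hb
    have hle : enumOrd (C ∪ Ici κ.ord) j ≤ x := by
      apply Ordinal.enumOrd_le_of_forall_lt (Or.inl hxC)
      intro k hk
      have h1 : enumOrd (C ∪ Ici κ.ord) k < enumOrd (C ∪ Ici κ.ord) k + 1 := by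
        rw [Ordinal.add_one_eq_succ]; exact Order.lt_succ _
      exact lt_of_lt_of_le h1
        (le_trans (Ordinal.le_bsup (fun k _ => enumOrd (C ∪ Ici κ.ord) k + 1) k hk) hxb.le)
    have hlt : enumOrd (C ∪ Ici κ.ord) j < κ.ord := lt_of_le_of_lt hle (hC.1 hxC)
    rcases Ordinal.enumOrd_mem hs j with h | h
    · exact ⟨h, hlt⟩
    · exact absurd hlt (not_lt.2 h)

lemma fP_props (hreg : κ.IsRegular) (hunc : ℵ₀ < κ) (p : Q0 κ.ord) :
    (∀ α, α < κ.ord →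
      fP κ.ord p α ∈ p.C ∧ α < fP κ.ord p α ∧ fP κ.ord p α < κ.ord) ∧
    (∀ α α', α ≤ α' → α' < κ.ord → fP κ.ord p α ≤ fP κ.ord p α') ∧
    (∀ α ξ, α < κ.ord → ξ < fP κ.ord p α →
      ∃ x ∈ p.C, ξ < x ∧ x < fP κ.ord p α) := by
  have hC := p.club
  set C := p.C with hCdef
  set s : Set Ordinal := C ∪ Ici κ.ord with hsdef
  have hs := not_bddAbove_aux C κ.ord
  set e := Ordinal.enumOrd s with hedef
  have h1 := enum_mem_lt hreg hunc hC
  have hsm : StrictMono e := Ordinal.enumOrd_strictMono hs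
  have hge : ∀ i, i ≤ e i := fun i => hsm.le_apply
  have hsurj : ∀ β ∈ C, ∃ i, i < κ.ord ∧ e i = β := by
    intro β hβ
    obtain ⟨i, hi⟩ := Ordinal.enumOrd_surjective hs (Or.inl hβ)
    exact ⟨i, lt_of_le_of_lt (le_of_le_of_eq (hge i) hi) (hC.1 hβ), hi⟩
  have himg : ∀ i < κ.ord, C ∩ Iio (e i) = e '' Iio i := by
    intro i hi
    ext x
    constructor
    · rintro ⟨hxC, hxe⟩
      obtain ⟨j, hj, rfl⟩ := hsurj x hxC
      exact ⟨j, hsm.lt_iff_lt.1 hxe, rfl⟩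
    · rintro ⟨j, hj, rfl⟩
      exact ⟨(h1 j (hj.trans hi)).1, hsm hj⟩
  have hotp : ∀ i < κ.ord, setOtp (C ∩ Iio (e i)) = i := by
    intro i hi
    rw [himg i hi]
    have hmono : StrictMonoOn e (Iio i) := hsm.strictMonoOn _
    rw [Set.image_eq_range e (Iio i)]
    have := hmono.orderIso e (Iio i)
    rw [Set.image_eq_range e (Iio i)] at this
    exact setOtp_eq ⟨this⟩
  have hωα : ∀ α, α < κ.ord → Ordinal.omega0 * α + Ordinal.omega0 < κ.ord := fun α hα =>
    add_lt_l hunc (mul_lt_l hunc (omega0_lt_l hunc) hα) (omega0_lt_l hunc)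
  have hfp : ∀ α, α < κ.ord → fP κ.ord p α = e (Ordinal.omega0 * α + Ordinal.omega0) := by
    intro α hα
    have hset : {β | β ∈ p.C ∧ setOtp (p.C ∩ Iio β) = Ordinal.omega0 * α + Ordinal.omega0} =
        {e (Ordinal.omega0 * α + Ordinal.omega0)} := by
      ext β
      simp only [Set.mem_setOf_eq, Set.mem_singleton_iff]
      constructor
      · rintro ⟨hβC, hst⟩
        obtain ⟨i, hi, rfl⟩ := hsurj β hβC
        rw [hotp i hi] at hst
        rw [hst]
      · rintro rfl
        exact ⟨(h1 _ (hωα α hα)).1, hotp _ (hωα α hα)⟩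
    show sInf {β | β ∈ p.C ∧ setOtp (p.C ∩ Iio β) = Ordinal.omega0 * α + Ordinal.omega0}
      = e (Ordinal.omega0 * α + Ordinal.omega0)
    rw [hset, csInf_singleton]
  refine ⟨fun α hα => ?_, fun α α' hαα' hα' => ?_, fun α ξ hα hξ => ?_⟩
  · rw [hfp α hα]
    refine ⟨(h1 _ (hωα α hα)).1, ?_, (h1 _ (hωα α hα)).2⟩
    have hle : α ≤ Ordinal.omega0 * α := Ordinal.le_mul_right α Ordinal.omega0_pos
    have hlt : Ordinal.omega0 * α < Ordinal.omega0 * α + Ordinal.omega0 := by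
      simpa using add_lt_add_left Ordinal.omega0_pos (Ordinal.omega0 * α)
    exact lt_of_lt_of_le (lt_of_le_of_lt hle hlt) (hge _)
  · rw [hfp α (lt_of_le_of_lt hαα' hα'), hfp α' hα']
    exact hsm.monotone (add_le_add_left (mul_le_mul_right hαα' _) _)
  · rw [hfp α hα] at hξ ⊢
    set i := Ordinal.omega0 * α + Ordinal.omega0 with hidef
    have hilt : i < κ.ord := hωα α hα
    have hlim : Order.IsSuccLimit i := Ordinal.isSuccLimit_add _ Ordinal.isSuccLimit_omega0
    by_contra hcon
    push_neg at hcon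
    have hTle : ∀ x ∈ C ∩ Iio (e i), x ≤ ξ := by
      rintro x ⟨hxC, hxe⟩
      by_contra hgt
      exact absurd hxe (not_lt.2 (hcon x hxC (not_le.1 hgt)))
    have hTne : (C ∩ Iio (e i)).Nonempty :=
      ⟨e 0, (h1 0 (zero_lt_l hunc)).1, hsm hlim.pos⟩
    have hnomax : ∀ x ∈ C ∩ Iio (e i), ∃ y ∈ C ∩ Iio (e i), x < y := by
      intro x hx
      rw [himg i hilt] at hx
      obtain ⟨j, hj, rfl⟩ := hx
      have hj1 : j + 1 < i := by
        rw [Ordinal.add_one_eq_succ]; exact hlim.succ_lt hj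
      refine ⟨e (j + 1), ?_, hsm (by rw [Ordinal.add_one_eq_succ]; exact Order.lt_succ j)⟩
      rw [himg i hilt]
      exact ⟨j + 1, hj1, rfl⟩
    set σ := sSup (C ∩ Iio (e i)) with hσdef
    have hbdd : BddAbove (C ∩ Iio (e i)) := ⟨ξ, hTle⟩
    have hltσ : ∀ x ∈ C ∩ Iio (e i), x < σ := by
      intro x hx
      obtain ⟨y, hy, hxy⟩ := hnomax x hx
      exact lt_of_lt_of_le hxy (le_csSup hbdd hy)
    have hσξ : σ ≤ ξ := csSup_le hTne hTle
    have hσe : σ < e i := lt_of_le_of_lt hσξ hξ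
    have hset2 : C ∩ Iio σ = C ∩ Iio (e i) := by
      ext z
      constructor
      · rintro ⟨hz, hzσ⟩; exact ⟨hz, lt_trans hzσ hσe⟩
      · intro hz; exact ⟨hz.1, hltσ z hz⟩
    have hσ0 : σ ≠ 0 := by
      obtain ⟨y, hy⟩ := hTne
      exact (lt_of_le_of_lt (show (0:Ordinal) ≤ y from zero_le) (hltσ y hy)).ne'
    have hσl : σ < κ.ord := lt_trans hσe (h1 i hilt).2
    have hσC : σ ∈ C := hC.2.1 σ hσl hσ0 (by rw [hset2])
    exact absurd (hltσ σ ⟨hσC, hσe⟩) (lt_irrefl σ)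

/-- initial function of the recursion -/
def gzero (g : Ordinal → Ordinal) : Ordinal → Ordinal := fun δ => sup1 g δ + (δ + 1)

/-- step function of the recursion -/
def gstep (C : Set Ordinal) (g : Ordinal → Ordinal) : Ordinal → Ordinal :=
  fun δ => sup1 g (nxt C δ) + (nxt C δ + 1)

lemma gzero_flam (hreg : κ.IsRegular) (hunc : ℵ₀ < κ) {g : Ordinal → Ordinal}
    (hg : g ∈ funSp κ.ord) : gzero g ∈ Flam κ.ord := by
  refine ⟨fun α hα => ?_, fun α β hαβ hβ => ?_, fun γ hγ => ?_⟩
  · exact add_lt_l hunc (sup1_lt_l hreg hunc hα fun ξ hξ => hg ξ (lt_of_le_of_lt hξ hα))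
      (add_lt_l hunc hα (one_lt_l hunc))
  · exact add_le_add (sup1_mono hαβ) (add_le_add_left hαβ 1)
  · refine ⟨γ, hγ, ?_⟩
    calc γ ≤ γ + 1 := (lt_add_one γ).le
    _ ≤ sup1 g γ + (γ + 1) := le_add_self

lemma gzero_lt {g : Ordinal → Ordinal} (δ : Ordinal) : g δ < gzero g δ :=
  lt_of_lt_of_le (lt_sup1 le_rfl) (le_self_add)

lemma gstep_flam (hreg : κ.IsRegular) (hunc : ℵ₀ < κ) {C : Set Ordinal}
    {g : Ordinal → Ordinal} (hC : IsClubIn C κ.ord) (hg : g ∈ Flam κ.ord) :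
    gstep C g ∈ Flam κ.ord := by
  refine ⟨fun α hα => ?_, fun α β hαβ hβ => ?_, fun γ hγ => ?_⟩
  · have hn := nxt_spec hC hα
    exact add_lt_l hunc
      (sup1_lt_l hreg hunc hn.2.2 fun ξ hξ => hg.1 ξ (lt_of_le_of_lt hξ hn.2.2))
      (add_lt_l hunc hn.2.2 (one_lt_l hunc))
  · have hn := nxt_mono hC hαβ hβ
    exact add_le_add (sup1_mono hn) (add_le_add_left hn 1)
  · refine ⟨γ, hγ, ?_⟩
    have hn := nxt_spec hC hγ
    calc γ ≤ nxt C γ + 1 := (lt_of_lt_of_le hn.2.1 (lt_add_one _).le).le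
    _ ≤ sup1 g (nxt C γ) + (nxt C γ + 1) := le_add_self

lemma gstep_lt {C : Set Ordinal} {g : Ordinal → Ordinal} (hC : IsClubIn C κ.ord)
    {δ : Ordinal} (hδ : δ < κ.ord) : g δ < gstep C g δ :=
  lt_of_lt_of_le (lt_sup1 (nxt_spec hC hδ).2.1.le) (le_self_add)

lemma gstep_bound {C : Set Ordinal} {g : Ordinal → Ordinal} {δ β : Ordinal}
    (h : β ≤ nxt C δ) : g β < gstep C g δ :=
  lt_of_lt_of_le (lt_sup1 h) (le_self_add)

end AuxProof

lemma dominating_core (κ : Cardinal.{0}) (hreg : κ.IsRegular) (hunc : ℵ₀ < κ)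
    (G : Set (Q0 κ.ord))
    (hdir : DirLtOn κ.ord (Cardinal.aleph 1) G (le0 κ.ord))
    (hult : IsUltrafilterOn κ.ord (filG κ.ord G))
    (hwr : WeaklyReasonable κ.ord (filG κ.ord G)) :
    ∀ g ∈ funSp κ.ord, ∃ r ∈ G, ∃ α, α < κ.ord ∧
      ∀ β, α < β → β < κ.ord → g β < fP κ.ord r β := by
  intro g hg
  obtain ⟨hD1, hD2, hD3, hD4, hD5, hD6⟩ := hult
  have hAsub : ∀ (f : Ordinal → Ordinal), f ∈ Flam κ.ord → ∀ (C : Set Ordinal), C ⊆ Iio κ.ord →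
      (⋃ δ ∈ C, Ico δ (δ + f δ)) ⊆ Iio κ.ord := by
    intro f hf C hCsub x hx
    simp only [Set.mem_iUnion] at hx
    obtain ⟨δ, hδ, hx1, hx2⟩ := hx
    exact lt_trans hx2 (add_lt_l hunc (hCsub hδ) (hf.1 δ (hCsub hδ)))
  have hclub : ∀ (f : Ordinal → Ordinal), f ∈ Flam κ.ord →
      ∀ (C₀ : Set Ordinal), IsClubIn C₀ κ.ord →
      ∃ C, IsClubIn C κ.ord ∧ C ⊆ C₀ ∧ (⋃ δ ∈ C, Ico δ (δ + f δ)) ∉ filG κ.ord G := by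
    intro f hf C₀ hC₀
    obtain ⟨C', hC', hA⟩ := hwr f hf
    refine ⟨C' ∩ C₀, club_inter hreg hunc hC' hC₀, Set.inter_subset_right, fun hmem => hA ?_⟩
    exact hD4 _ _ hmem (Set.biUnion_subset_biUnion_left Set.inter_subset_left)
      (hAsub f hf C' hC'.1)
  -- the recursion producing `g_n`, `C_n`
  obtain ⟨C₀, hC₀, hC₀sub, hA₀⟩ :=
    hclub (gzero g) (gzero_flam hreg hunc hg) (Iio κ.ord) (club_Iio hunc)
  let T := {s : (Ordinal → Ordinal) × Set Ordinal //
    s.1 ∈ Flam κ.ord ∧ IsClubIn s.2 κ.ord ∧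
    (⋃ δ ∈ s.2, Ico δ (δ + s.1 δ)) ∉ filG κ.ord G}
  have hstepT : ∀ s : T, ∃ t : T, t.1.1 = gstep s.1.2 s.1.1 ∧ t.1.2 ⊆ s.1.2 := by
    rintro ⟨⟨f, C⟩, hf, hC, hA⟩
    have hf' := gstep_flam hreg hunc hC hf
    obtain ⟨C', hC', hsub, hA'⟩ := hclub (gstep C f) hf' C hC
    exact ⟨⟨⟨gstep C f, C'⟩, hf', hC', hA'⟩, rfl, hsub⟩
  choose stepF hstep1 hstep2 using hstepT
  let seq : ℕ → T := fun n => Nat.rec ⟨⟨gzero g, C₀⟩, gzero_flam hreg hunc hg, hC₀, hA₀⟩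
    (fun _ p => stepF p) n
  have hflam : ∀ n, (seq n).1.1 ∈ Flam κ.ord := fun n => (seq n).2.1
  have hclubn : ∀ n, IsClubIn (seq n).1.2 κ.ord := fun n => (seq n).2.2.1
  have hAn : ∀ n, (⋃ δ ∈ (seq n).1.2, Ico δ (δ + (seq n).1.1 δ)) ∉ filG κ.ord G :=
    fun n => (seq n).2.2.2
  have hg0 : (seq 0).1.1 = gzero g := rfl
  have hgsucc : ∀ n, (seq (n + 1)).1.1 = gstep (seq n).1.2 (seq n).1.1 :=
    fun n => hstep1 (seq n)
  have hCsucc : ∀ n, (seq (n + 1)).1.2 ⊆ (seq n).1.2 := fun n => hstep2 (seq n)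
  have hCle : ∀ m n, n ≤ m → (seq m).1.2 ⊆ (seq n).1.2 := by
    intro m
    induction m with
    | zero => intro n hn; rw [Nat.le_zero.1 hn]
    | succ m ih =>
      intro n hn
      rcases Nat.eq_or_lt_of_le hn with heq | hlt
      · rw [heq]
      · exact (hCsucc m).trans (ih n (Nat.lt_succ_iff.1 hlt))
  -- the complements are in the ultrafilter, hence in `fil r` for a single `r ∈ G`
  have hBD : ∀ n, (Iio κ.ord \ ⋃ δ ∈ (seq n).1.2, Ico δ (δ + (seq n).1.1 δ)) ∈ filG κ.ord G := by
    intro n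
    rcases hD6 _ (hAsub ((seq n).1.1) (hflam n) ((seq n).1.2) (hclubn n).1) with h | h
    · exact absurd h (hAn n)
    · exact h
  have hBfil : ∀ n, ∃ p, p ∈ G ∧
      (Iio κ.ord \ ⋃ δ ∈ (seq n).1.2, Ico δ (δ + (seq n).1.1 δ)) ∈ fil κ.ord p := by
    intro n
    have h := hBD n
    simp only [filG, Set.mem_iUnion] at h
    obtain ⟨p, hp, hmem⟩ := h
    exact ⟨p, hp, hmem⟩
  choose pf hpG hpfil using hBfil
  have hSsub : Set.range pf ⊆ G := by rintro q ⟨n, rfl⟩; exact hpG n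
  have hScard : #(Set.range pf) < Cardinal.aleph 1 := by
    exact lt_of_le_of_lt (Set.countable_range pf).le_aleph0 Cardinal.aleph0_lt_aleph_one
  obtain ⟨r, hrG, hrub⟩ := hdir.2 (Set.range pf) hSsub hScard
  have hBr : ∀ n, (Iio κ.ord \ ⋃ δ ∈ (seq n).1.2, Ico δ (δ + (seq n).1.1 δ)) ∈ fil κ.ord r :=
    fun n => hrub (pf n) ⟨n, rfl⟩ (hpfil n)
  have hε : ∀ n, ∃ ε, ε < κ.ord ∧ ∀ δ ∈ r.C, ε ≤ δ →
      (Iio κ.ord \ ⋃ δ' ∈ (seq n).1.2, Ico δ' (δ' + (seq n).1.1 δ')) ∩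
        Ico δ (nxt r.C δ) ∈ r.d δ :=
    fun n => (hBr n).2
  choose ε hεlt hεpr using hε
  obtain ⟨hfp1, hfp2, hfp3⟩ := fP_props hreg hunc r
  -- the threshold
  have hΘlt : (⨆ n, ε n) < κ.ord := iSup_nat_lt_l hreg hunc hεlt
  have hΘge : ∀ n, ε n ≤ ⨆ n, ε n := fun n => le_ciSup (bdd_range_nat hεlt) n
  have hCωclub : IsClubIn (⋂ n, (seq n).1.2) κ.ord := club_iInter hreg hunc hclubn
  obtain ⟨cs, hcsC, hcsgt⟩ := hCωclub.2.2 _ hΘlt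
  -- the key claim
  have star : ∀ (m : ℕ) (β : Ordinal), β < κ.ord → ε m ≤ β →
      (∃ ξ ∈ (seq m).1.2, β ≤ ξ ∧ ξ < fP κ.ord r β) →
      (seq m).1.1 β < fP κ.ord r β := by
    intro m β hβ hεβ hex
    obtain ⟨ξ, hξC, hβξ, hξfp⟩ := hex
    have hξl : ξ < κ.ord := lt_trans hξfp (hfp1 β hβ).2.2
    obtain ⟨x, hxC, hξx, hxfp⟩ := hfp3 β ξ hβ hξfp
    have hδspec := nxt_spec r.club hξl
    have hδfp : nxt r.C ξ < fP κ.ord r β := lt_of_le_of_lt (nxt_le_of_mem hxC hξx) hxfp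
    have hnxtδ : nxt r.C (nxt r.C ξ) ≤ fP κ.ord r β := nxt_le_of_mem (hfp1 β hβ).1 hδfp
    have hδε : ε m ≤ nxt r.C ξ := le_trans hεβ (le_trans hβξ hδspec.2.1.le)
    have hdmem := hεpr m (nxt r.C ξ) hδspec.1 hδε
    have hne : ((Iio κ.ord \ ⋃ δ' ∈ (seq m).1.2, Ico δ' (δ' + (seq m).1.1 δ')) ∩
        Ico (nxt r.C ξ) (nxt r.C (nxt r.C ξ))).Nonempty := by
      rcases Set.eq_empty_or_nonempty ((Iio κ.ord \ ⋃ δ' ∈ (seq m).1.2,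
          Ico δ' (δ' + (seq m).1.1 δ')) ∩ Ico (nxt r.C ξ) (nxt r.C (nxt r.C ξ))) with he | hne
      · rw [he] at hdmem
        exact absurd hdmem ((r.ultra (nxt r.C ξ) hδspec.1).2.2.1)
      · exact hne
    obtain ⟨ζ, hζB, hζδ, hζnxt⟩ := hne
    have hζfp : ζ < fP κ.ord r β := lt_of_lt_of_le hζnxt hnxtδ
    have hζl : ζ < κ.ord := lt_trans hζfp (hfp1 β hβ).2.2
    have hξζ : ξ ≤ ζ := (lt_of_lt_of_le hδspec.2.1 hζδ).le
    have hηne : ((seq m).1.2 ∩ Iic ζ).Nonempty := ⟨ξ, hξC, hξζ⟩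
    obtain ⟨hηC, hηζ⟩ := sSup_mem_club (hclubn m) hζl hηne
    have hξη : ξ ≤ sSup ((seq m).1.2 ∩ Iic ζ) :=
      le_csSup ⟨ζ, fun z hz => hz.2⟩ ⟨hξC, hξζ⟩
    have hηl : sSup ((seq m).1.2 ∩ Iic ζ) < κ.ord := lt_of_le_of_lt hηζ hζl
    have hζA : ζ ∉ ⋃ δ' ∈ (seq m).1.2, Ico δ' (δ' + (seq m).1.1 δ') := hζB.2
    have hgη : sSup ((seq m).1.2 ∩ Iic ζ) + (seq m).1.1 (sSup ((seq m).1.2 ∩ Iic ζ)) ≤ ζ := by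
      by_contra hcon
      push_neg at hcon
      exact hζA (Set.mem_biUnion hηC ⟨hηζ, hcon⟩)
    calc (seq m).1.1 β ≤ (seq m).1.1 (sSup ((seq m).1.2 ∩ Iic ζ)) :=
          (hflam m).2.1 β _ (le_trans hβξ hξη) hηl
    _ ≤ sSup ((seq m).1.2 ∩ Iic ζ) + (seq m).1.1 (sSup ((seq m).1.2 ∩ Iic ζ)) :=
          le_add_self
    _ ≤ ζ := hgη
    _ < nxt r.C (nxt r.C ξ) := hζnxt
    _ ≤ fP κ.ord r β := hnxtδ
  -- conclusion
  refine ⟨r, hrG, cs, hCωclub.1 hcsC, ?_⟩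
  intro β hcsβ hβ
  have hηne : ((⋂ n, (seq n).1.2) ∩ Iic β).Nonempty := ⟨cs, hcsC, hcsβ.le⟩
  obtain ⟨hηC, hηβ⟩ := sSup_mem_club hCωclub hβ hηne
  set η := sSup ((⋂ n, (seq n).1.2) ∩ Iic β) with hηdef
  have hcsη : cs ≤ η := le_csSup ⟨β, fun z hz => hz.2⟩ ⟨hcsC, hcsβ.le⟩
  have hηl : η < κ.ord := lt_of_le_of_lt hηβ hβ
  by_cases hcase : ∃ n, β < nxt ((seq n).1.2) η
  · obtain ⟨n, hn⟩ := hcase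
    have hchain : ∀ k, g β < (seq k).1.1 β := by
      intro k
      induction k with
      | zero => rw [hg0]; exact gzero_lt β
      | succ k ih =>
        rw [hgsucc k]
        exact lt_trans ih (gstep_lt (hclubn k) hβ)
    have h1 : (seq n).1.1 β < (seq (n + 1)).1.1 η := by
      rw [hgsucc n]
      exact gstep_bound hn.le
    have h2 : (seq (n + 1)).1.1 η < fP κ.ord r η := by
      apply star (n + 1) η hηl (le_trans (hΘge (n + 1)) (le_trans hcsgt.le hcsη))
      exact ⟨η, Set.mem_iInter.1 hηC (n + 1), le_rfl, (hfp1 η hηl).2.1⟩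
    have h3 : fP κ.ord r η ≤ fP κ.ord r β := hfp2 η β hηβ hβ
    exact lt_of_lt_of_le (lt_trans (lt_trans (hchain n) h1) h2) h3
  · push_neg at hcase
    exfalso
    have hnxtlt : ∀ n, nxt ((seq n).1.2) η < κ.ord := fun n => (nxt_spec (hclubn n) hηl).2.2
    have hρβ : (⨆ n, nxt ((seq n).1.2) η) ≤ β := ciSup_le hcase
    have hρl : (⨆ n, nxt ((seq n).1.2) η) < κ.ord := lt_of_le_of_lt hρβ hβ
    have hηρ : η < ⨆ n, nxt ((seq n).1.2) η :=
      lt_of_lt_of_le (nxt_spec (hclubn 0) hηl).2.1 (le_ciSup (bdd_range_nat hnxtlt) 0)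
    have hmono : ∀ m n, n ≤ m → nxt ((seq n).1.2) η ≤ nxt ((seq m).1.2) η := by
      intro m n hnm
      exact csInf_le_csInf (OrderBot.bddBelow _)
        ⟨nxt ((seq m).1.2) η, (nxt_spec (hclubn m) hηl).1, (nxt_spec (hclubn m) hηl).2.1⟩
        (Set.inter_subset_inter_left _ (hCle m n hnm))
    have hρmem : ∀ n, (⨆ n, nxt ((seq n).1.2) η) ∈ (seq n).1.2 := by
      intro n
      by_cases hat : ∃ m, n ≤ m ∧ nxt ((seq m).1.2) η = ⨆ k, nxt ((seq k).1.2) η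
      · obtain ⟨m, hnm, heq⟩ := hat
        exact hCle m n hnm (heq ▸ (nxt_spec (hclubn m) hηl).1)
      · push_neg at hat
        apply (hclubn n).2.1 _ hρl (lt_of_le_of_lt (show (0:Ordinal) ≤ η from zero_le) hηρ).ne'
        have hsub2 : ∀ m, n ≤ m →
            nxt ((seq m).1.2) η ∈ (seq n).1.2 ∩ Iio (⨆ k, nxt ((seq k).1.2) η) := by
          intro m hnm
          refine ⟨hCle m n hnm (nxt_spec (hclubn m) hηl).1, ?_⟩
          exact lt_of_le_of_ne (le_ciSup (bdd_range_nat hnxtlt) m) (hat m hnm)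
        refine le_antisymm (csSup_le ⟨_, hsub2 n le_rfl⟩ fun z hz => hz.2.le) ?_
        refine ciSup_le fun m => ?_
        calc nxt ((seq m).1.2) η ≤ nxt ((seq (max m n)).1.2) η := hmono _ _ (le_max_left m n)
        _ ≤ sSup ((seq n).1.2 ∩ Iio (⨆ k, nxt ((seq k).1.2) η)) :=
            le_csSup ⟨⨆ k, nxt ((seq k).1.2) η, fun z hz => hz.2.le⟩
              (hsub2 _ (le_max_right m n))
    have hle : (⨆ n, nxt ((seq n).1.2) η) ≤ η := by
      rw [hηdef]
      exact le_csSup ⟨β, fun z hz => hz.2⟩ ⟨Set.mem_iInter.2 hρmem, hρβ⟩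
    exact absurd hηρ (not_lt.2 hle)

/-- Theorem 3.1(1): if `G*₀ ⊆ Q⁰_λ` is `(<ℵ₁)`-directed w.r.t. `≤⁰` and `fil(G*₀)` is
a weakly reasonable (uniform) ultrafilter, then `{f_p : p ∈ G*₀}` is a dominating
family in `^λλ`; in particular `|G*₀| ≥ 𝔡_λ`. -/
theorem stmt17 (κ : Cardinal) (hreg : κ.IsRegular) (hunc : ℵ₀ < κ)
    (G : Set (Q0 κ.ord))
    (hdir : DirLtOn κ.ord (Cardinal.aleph 1) G (le0 κ.ord))
    (hult : IsUltrafilterOn κ.ord (filG κ.ord G))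
    (huni : IsUniformOn κ.ord (filG κ.ord G))
    (hwr : WeaklyReasonable κ.ord (filG κ.ord G)) :
    {f | ∃ p ∈ G, f = fP κ.ord p} ⊆ funSp κ.ord ∧
    IsDominating κ.ord {f | ∃ p ∈ G, f = fP κ.ord p} ∧
    dLam κ.ord ≤ #G := by
  have hcore := dominating_core κ hreg hunc G hdir hult hwr
  have hfun : {f | ∃ p ∈ G, f = fP κ.ord p} ⊆ funSp κ.ord := by
    rintro f ⟨p, hp, rfl⟩
    intro α hα
    exact ((fP_props hreg hunc p).1 α hα).2.2
  have hdom : IsDominating κ.ord {f | ∃ p ∈ G, f = fP κ.ord p} := by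
    intro g hg
    obtain ⟨r, hrG, α, hα, hd⟩ := hcore g hg
    exact ⟨fP κ.ord r, ⟨r, hrG, rfl⟩, α, hα, hd⟩
  refine ⟨hfun, hdom, ?_⟩
  have hle1 : dLam κ.ord ≤ #{f | ∃ p ∈ G, f = fP κ.ord p} :=
    csInf_le (OrderBot.bddBelow _) ⟨_, hfun, hdom, rfl⟩
  refine le_trans hle1 ?_
  have himg : {f | ∃ p ∈ G, f = fP κ.ord p} = (fun p => fP κ.ord p) '' G := by
    ext f
    constructor
    · rintro ⟨p, hp, rfl⟩; exact ⟨p, hp, rfl⟩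
    · rintro ⟨p, hp, rfl⟩; exact ⟨p, hp, rfl⟩
  rw [himg]
  exact Cardinal.mk_image_le


end Sh830

end
end

section
/- Let λ be a regular uncountable cardinal. Suppose G*₁ ⊆ Q⁰_λ is directed with respect to ≤⁰ and fil(G*₁) is a weakly reasonable ultrafilter on λ. Then F₁ = {f_p : p ∈ G*₁} is a club-dominating family in ^λλ. In particular, |G*₁| ≥ 𝔡_{cl(λ)}. -/
open Set Ordinal Cardinal

noncomputable section

namespace Sh830

/-! ### Auxiliary lemmas -/

theorem aux_le_of_strictMono_Iio {a : Ordinal} (f : Iio a → Iio a) (hf : StrictMono f) :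
    ∀ o (h : o < a), o ≤ (f ⟨o, h⟩).1 := by
  intro o
  induction o using Ordinal.induction with
  | _ o ih =>
    intro h
    by_contra hc
    push_neg at hc
    have h2 := ih (f ⟨o, h⟩).1 hc (f ⟨o, h⟩).2
    have h3 : f ⟨(f ⟨o, h⟩).1, (f ⟨o, h⟩).2⟩ < f ⟨o, h⟩ := hf (Subtype.mk_lt_mk.mpr hc)
    exact absurd (h2.trans_lt (Subtype.coe_lt_coe.mpr h3)) (lt_irrefl _)

theorem aux_Iio_le_of_orderEmbedding {a b : Ordinal} (f : (Iio a) ↪o (Iio b)) : a ≤ b := by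
  by_contra hc
  push_neg at hc
  let g : Iio a → Iio a := fun x => ⟨(f x).1, (f x).2.trans hc⟩
  have hg : StrictMono g := by
    intro x y h
    exact Subtype.mk_lt_mk.mpr (Subtype.coe_lt_coe.mpr (f.strictMono h))
  have h1 := aux_le_of_strictMono_Iio g hg b hc
  exact absurd (h1.trans_lt (f ⟨b, hc⟩).2) (lt_irrefl _)

theorem aux_Iio_orderIso_eq {a b : Ordinal} (f : (Iio a : Set Ordinal) ≃o (Iio b : Set Ordinal)) :
    a = b :=
  le_antisymm (aux_Iio_le_of_orderEmbedding f.toOrderEmbedding)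
    (aux_Iio_le_of_orderEmbedding f.symm.toOrderEmbedding)

theorem setOtp_eq_of_iso {S : Set Ordinal} {i : Ordinal} (h : Nonempty ((Iio i : Set Ordinal) ≃o S)) :
    setOtp S = i := by
  have hset : {o : Ordinal | Nonempty ((Iio o : Set Ordinal) ≃o S)} = {i} := by
    ext o
    simp only [mem_setOf_eq, mem_singleton_iff]
    constructor
    · rintro ⟨g⟩
      exact aux_Iio_orderIso_eq (g.trans h.some.symm)
    · rintro rfl
      exact h
  rw [setOtp, hset, csInf_singleton]

/-! ### The enumeration of a club -/

/-- The increasing enumeration of a set of ordinals. -/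
noncomputable def enumC (C : Set Ordinal) : Ordinal → Ordinal
  | i => sInf {x | x ∈ C ∧ ∀ j, ∀ _ : j < i, enumC C j < x}
termination_by i => i
decreasing_by exact ‹_›

theorem enumC_def (C : Set Ordinal) (i : Ordinal) :
    enumC C i = sInf {x | x ∈ C ∧ ∀ j, j < i → enumC C j < x} := by
  rw [enumC]

theorem nxt_mem {C : Set Ordinal} {l y : Ordinal} (hC : IsClubIn C l) (hy : y < l) :
    nxt C y ∈ C ∧ y < nxt C y := by
  obtain ⟨β, hβ, hyβ⟩ := hC.2.2 y hy
  have hne : (C ∩ Ioi y).Nonempty := ⟨β, hβ, hyβ⟩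
  have h := csInf_mem hne
  exact ⟨h.1, h.2⟩

theorem enumC_mem {κ : Cardinal} (hreg : κ.IsRegular) {C : Set Ordinal}
    (hC : IsClubIn C κ.ord) :
    ∀ i, i < κ.ord → (enumC C i ∈ C ∧ ∀ j, j < i → enumC C j < enumC C i) := by
  intro i
  induction i using Ordinal.induction with
  | _ i ih =>
    intro hi
    have hb : ∀ j (hj : j < i), enumC C j < κ.ord := fun j hj =>
      hC.1 ((ih j hj (hj.trans hi)).1)
    have hbl : Ordinal.bsup i (fun j _ => enumC C j) < κ.ord := by
      apply Ordinal.bsup_lt_ord ?_ hb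
      rw [hreg.cof_eq]
      exact Cardinal.lt_ord.mp hi
    obtain ⟨β, hβC, hbβ⟩ := hC.2.2 _ hbl
    have hβS : β ∈ {x | x ∈ C ∧ ∀ j, j < i → enumC C j < x} :=
      ⟨hβC, fun j hj => lt_of_le_of_lt (Ordinal.le_bsup _ j hj) hbβ⟩
    have hne : Set.Nonempty {x | x ∈ C ∧ ∀ j, j < i → enumC C j < x} := ⟨β, hβS⟩
    have hmem := csInf_mem hne
    rw [← enumC_def] at hmem
    exact ⟨hmem.1, fun j hj => hmem.2 j hj⟩

theorem enumC_lt_ord {κ : Cardinal} (hreg : κ.IsRegular) {C : Set Ordinal}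
    (hC : IsClubIn C κ.ord) {i : Ordinal} (hi : i < κ.ord) : enumC C i < κ.ord :=
  hC.1 (enumC_mem hreg hC i hi).1

theorem le_enumC {κ : Cardinal} (hreg : κ.IsRegular) {C : Set Ordinal}
    (hC : IsClubIn C κ.ord) : ∀ i, i < κ.ord → i ≤ enumC C i := by
  intro i
  induction i using Ordinal.induction with
  | _ i ih =>
    intro hi
    by_contra h
    push_neg at h
    have h1 := ih (enumC C i) h (lt_trans h hi)
    have h2 : enumC C (enumC C i) < enumC C i := (enumC_mem hreg hC i hi).2 _ h
    exact absurd (h1.trans_lt h2) (lt_irrefl _)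

theorem enumC_le_enumC {κ : Cardinal} (hreg : κ.IsRegular) {C : Set Ordinal}
    (hC : IsClubIn C κ.ord) {j k : Ordinal} (hjk : j ≤ k) (hk : k < κ.ord) :
    enumC C j ≤ enumC C k := by
  rcases lt_or_eq_of_le hjk with h | h
  · exact ((enumC_mem hreg hC k hk).2 j h).le
  · rw [h]

theorem enumC_image {κ : Cardinal} (hreg : κ.IsRegular) {C : Set Ordinal}
    (hC : IsClubIn C κ.ord) {i : Ordinal} (hi : i < κ.ord) :
    C ∩ Iio (enumC C i) = enumC C '' Iio i := by
  apply Subset.antisymm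
  · rintro y ⟨hyC, hy⟩
    by_contra hy2
    have hT : Set.Nonempty {j | j ≤ i ∧ y < enumC C j} := ⟨i, le_refl i, hy⟩
    have hj0 := csInf_mem hT
    set j0 := sInf {j | j ≤ i ∧ y < enumC C j} with hj0def
    have hlt : ∀ j, j < j0 → enumC C j < y := by
      intro j hj
      have hji : j ≤ i := le_trans hj.le hj0.1
      have hnotin : ¬ (y < enumC C j) := fun hcon =>
        absurd (csInf_le (OrderBot.bddBelow _) (show j ∈ {j | j ≤ i ∧ y < enumC C j} from ⟨hji, hcon⟩))
          (not_le.mpr hj)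
      push_neg at hnotin
      rcases lt_or_eq_of_le hnotin with h | h
      · exact h
      · exact absurd ⟨j, lt_of_lt_of_le hj hj0.1, h⟩ hy2
    have hle : enumC C j0 ≤ y := by
      rw [enumC_def]
      exact csInf_le (OrderBot.bddBelow _) ⟨hyC, hlt⟩
    exact absurd (hle.trans_lt hj0.2) (lt_irrefl _)
  · rintro y ⟨j, hj, rfl⟩
    exact ⟨(enumC_mem hreg hC j (lt_trans hj hi)).1, (enumC_mem hreg hC i hi).2 j hj⟩

theorem setOtp_enumC {κ : Cardinal} (hreg : κ.IsRegular) {C : Set Ordinal}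
    (hC : IsClubIn C κ.ord) {i : Ordinal} (hi : i < κ.ord) :
    setOtp (C ∩ Iio (enumC C i)) = i := by
  apply setOtp_eq_of_iso
  have himg := enumC_image hreg hC hi
  let F : {x : Ordinal // x ∈ Iio i} → {y : Ordinal // y ∈ C ∩ Iio (enumC C i)} := fun x =>
    ⟨enumC C x.1, by rw [himg]; exact ⟨x.1, x.2, rfl⟩⟩
  have hmono : StrictMono F := by
    intro x y hxy
    exact Subtype.mk_lt_mk.mpr ((enumC_mem hreg hC y.1 (lt_trans y.2 hi)).2 x.1 hxy)
  have hsurj : Function.Surjective F := by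
    rintro ⟨y, hy⟩
    rw [himg] at hy
    obtain ⟨j, hj, hej⟩ := hy
    exact ⟨⟨j, hj⟩, Subtype.ext hej⟩
  exact ⟨StrictMono.orderIsoOfSurjective F hmono hsurj⟩

theorem enumC_surj {κ : Cardinal} (hreg : κ.IsRegular) {C : Set Ordinal}
    (hC : IsClubIn C κ.ord) {β : Ordinal} (hβ : β ∈ C) :
    ∃ j, j < κ.ord ∧ enumC C j = β := by
  have hβl : β < κ.ord := hC.1 hβ
  have hsl : β + 1 < κ.ord := by
    rw [Ordinal.add_one_eq_succ]
    exact (Cardinal.isSuccLimit_ord hreg.aleph0_le).succ_lt hβl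
  have h1 : β < enumC C (β + 1) := by
    have : β < β + 1 := by
      rw [Ordinal.add_one_eq_succ]; exact Order.lt_succ β
    exact this.trans_le (le_enumC hreg hC _ hsl)
  have hmem : β ∈ C ∩ Iio (enumC C (β + 1)) := ⟨hβ, h1⟩
  rw [enumC_image hreg hC hsl] at hmem
  obtain ⟨j, hj, hej⟩ := hmem
  exact ⟨j, lt_trans hj hsl, hej⟩

theorem nxt_enumC {κ : Cardinal} (hreg : κ.IsRegular) {C : Set Ordinal}
    (hC : IsClubIn C κ.ord) {j : Ordinal} (hj1 : j + 1 < κ.ord) :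
    nxt C (enumC C j) = enumC C (j + 1) := by
  have hjj : j < j + 1 := by rw [Ordinal.add_one_eq_succ]; exact Order.lt_succ j
  have hj : j < κ.ord := hjj.trans hj1
  apply le_antisymm
  · apply csInf_le (OrderBot.bddBelow _)
    exact ⟨(enumC_mem hreg hC (j + 1) hj1).1, (enumC_mem hreg hC (j + 1) hj1).2 j hjj⟩
  · apply le_csInf
    · exact ⟨enumC C (j + 1), (enumC_mem hreg hC (j + 1) hj1).1,
        (enumC_mem hreg hC (j + 1) hj1).2 j hjj⟩
    · rintro y ⟨hyC, hy⟩
      obtain ⟨k, hk, rfl⟩ := enumC_surj hreg hC hyC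
      have hjk : j < k := by
        by_contra hcon
        push_neg at hcon
        exact absurd (enumC_le_enumC hreg hC hcon hj) (not_le.mpr hy)
      have : j + 1 ≤ k := by
        rw [Ordinal.add_one_eq_succ]; exact Order.succ_le_of_lt hjk
      exact enumC_le_enumC hreg hC this hk

theorem add_lt_ord' {κ : Cardinal} (hreg : κ.IsRegular) {a b : Ordinal}
    (ha : a < κ.ord) (hb : b < κ.ord) : a + b < κ.ord := by
  rw [Cardinal.lt_ord, Ordinal.card_add]
  exact Cardinal.add_lt_of_lt hreg.aleph0_le (Cardinal.lt_ord.mp ha) (Cardinal.lt_ord.mp hb)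

theorem omega_mul_add_lt {κ : Cardinal} (hreg : κ.IsRegular) (hunc : ℵ₀ < κ)
    {α : Ordinal} (hα : α < κ.ord) :
    Ordinal.omega0 * α + Ordinal.omega0 < κ.ord := by
  have hω : Ordinal.omega0 < κ.ord := Cardinal.omega0_lt_ord.mpr hunc
  apply add_lt_ord' hreg ?_ hω
  rw [Cardinal.lt_ord, Ordinal.card_mul, Ordinal.card_omega0]
  exact Cardinal.mul_lt_of_lt hreg.aleph0_le hunc (Cardinal.lt_ord.mp hα)

theorem fP_eq {κ : Cardinal} (hreg : κ.IsRegular) (hunc : ℵ₀ < κ) (p : Q0 κ.ord)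
    {α : Ordinal} (hα : α < κ.ord) :
    fP κ.ord p α = enumC p.C (Ordinal.omega0 * α + Ordinal.omega0) := by
  have hi : Ordinal.omega0 * α + Ordinal.omega0 < κ.ord := omega_mul_add_lt hreg hunc hα
  have hset : {β | β ∈ p.C ∧ setOtp (p.C ∩ Iio β) = Ordinal.omega0 * α + Ordinal.omega0}
      = {enumC p.C (Ordinal.omega0 * α + Ordinal.omega0)} := by
    ext β
    simp only [mem_setOf_eq, mem_singleton_iff]
    constructor
    · rintro ⟨hβC, hβo⟩
      obtain ⟨j, hj, rfl⟩ := enumC_surj hreg p.club hβC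
      rw [setOtp_enumC hreg p.club hj] at hβo
      rw [hβo]
    · rintro rfl
      exact ⟨(enumC_mem hreg p.club _ hi).1, setOtp_enumC hreg p.club hi⟩
  rw [fP, hset, csInf_singleton]

theorem fP_mem_C {κ : Cardinal} (hreg : κ.IsRegular) (hunc : ℵ₀ < κ) (p : Q0 κ.ord)
    {α : Ordinal} (hα : α < κ.ord) : fP κ.ord p α ∈ p.C := by
  rw [fP_eq hreg hunc p hα]
  exact (enumC_mem hreg p.club _ (omega_mul_add_lt hreg hunc hα)).1

theorem club_inter_s18 {κ : Cardinal} (hreg : κ.IsRegular) (hunc : ℵ₀ < κ)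
    {C C' : Set Ordinal} (hC : IsClubIn C κ.ord) (hC' : IsClubIn C' κ.ord) {ε : Ordinal}
    (hε : ε < κ.ord) : IsClubIn (C ∩ C' ∩ Ioi ε) κ.ord := by
  refine ⟨fun y hy => hC.1 hy.1.1, ?_, ?_⟩
  · -- closed
    intro δ hδ hδ0 hsup
    have hne : ((C ∩ C' ∩ Ioi ε) ∩ Iio δ).Nonempty := by
      by_contra hcon
      rw [not_nonempty_iff_eq_empty] at hcon
      rw [hcon] at hsup
      rw [csSup_empty] at hsup
      exact hδ0 hsup.symm
    have hbdd : BddAbove (C ∩ Iio δ) := ⟨δ, fun y hy => hy.2.le⟩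
    have hbdd' : BddAbove (C' ∩ Iio δ) := ⟨δ, fun y hy => hy.2.le⟩
    have hsubC : (C ∩ C' ∩ Ioi ε) ∩ Iio δ ⊆ C ∩ Iio δ := fun y hy => ⟨hy.1.1.1, hy.2⟩
    have hsubC' : (C ∩ C' ∩ Ioi ε) ∩ Iio δ ⊆ C' ∩ Iio δ := fun y hy => ⟨hy.1.1.2, hy.2⟩
    have hCs : sSup (C ∩ Iio δ) = δ := by
      apply le_antisymm
      · exact csSup_le (hne.mono hsubC) fun y hy => hy.2.le
      · exact le_trans hsup.ge (csSup_le_csSup hbdd hne hsubC)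
    have hC's : sSup (C' ∩ Iio δ) = δ := by
      apply le_antisymm
      · exact csSup_le (hne.mono hsubC') fun y hy => hy.2.le
      · exact le_trans hsup.ge (csSup_le_csSup hbdd' hne hsubC')
    obtain ⟨y, hy⟩ := hne
    exact ⟨⟨hC.2.1 δ hδ hδ0 hCs, hC'.2.1 δ hδ hδ0 hC's⟩, (show ε < δ from lt_trans hy.1.2 hy.2)⟩
  · -- unbounded
    intro α hα
    set x : ℕ → Ordinal := fun n => Nat.rec (max α ε + 1) (fun _ y => nxt C' (nxt C y)) n with hx
    have hxl : ∀ n, x n < κ.ord := by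
      intro n
      induction n with
      | zero =>
        have h1 : max α ε < κ.ord := max_lt hα hε
        have h2 : (1 : Ordinal) < κ.ord := lt_trans Ordinal.one_lt_omega0
          (Cardinal.omega0_lt_ord.mpr hunc)
        exact add_lt_ord' hreg h1 h2
      | succ n ih =>
        have h1 := nxt_mem hC ih
        have h1l : nxt C (x n) < κ.ord := hC.1 h1.1
        have h2 := nxt_mem hC' h1l
        exact hC'.1 h2.1
    have hxmono : ∀ n, x n < x (n + 1) := by
      intro n
      have h1 := nxt_mem hC (hxl n)
      have h2 := nxt_mem hC' (hC.1 h1.1)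
      exact lt_trans h1.2 h2.2
    have hbd : BddAbove (range x) := ⟨κ.ord, by rintro _ ⟨n, rfl⟩; exact (hxl n).le⟩
    set δ := ⨆ n, x n with hδdef
    have hxle : ∀ n, x n ≤ δ := fun n => le_ciSup hbd n
    have hxlt : ∀ n, x n < δ := fun n => lt_of_lt_of_le (hxmono n) (hxle (n + 1))
    have hδl : δ < κ.ord := by
      rw [hδdef]
      apply Ordinal.iSup_lt_ord_lift ?_ hxl
      rw [hreg.cof_eq]
      simpa using hunc
    have hCmem : ∀ n, nxt C (x n) ∈ C ∩ Iio δ := by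
      intro n
      refine ⟨(nxt_mem hC (hxl n)).1, ?_⟩
      have h2 := nxt_mem hC' (hC.1 (nxt_mem hC (hxl n)).1)
      exact lt_of_lt_of_le h2.2 (hxle (n + 1))
    have hC'mem : ∀ n, x (n + 1) ∈ C' ∩ Iio δ := by
      intro n
      have h1 := nxt_mem hC (hxl n)
      have h2 := nxt_mem hC' (hC.1 h1.1)
      exact ⟨h2.1, hxlt (n + 1)⟩
    have hδ0 : δ ≠ 0 := by
      intro hcon
      have := hxlt 0
      rw [hcon] at this
      exact absurd this (not_lt_of_ge zero_le)
    have hbddδC : BddAbove (C ∩ Iio δ) := ⟨δ, fun y hy => hy.2.le⟩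
    have hbddδC' : BddAbove (C' ∩ Iio δ) := ⟨δ, fun y hy => hy.2.le⟩
    have hδC : δ ∈ C := by
      apply hC.2.1 δ hδl hδ0
      apply le_antisymm
      · exact csSup_le ⟨_, hCmem 0⟩ fun y hy => hy.2.le
      · rw [hδdef]
        apply ciSup_le
        intro n
        exact le_trans (nxt_mem hC (hxl n)).2.le (le_csSup hbddδC (hCmem n))
    have hδC' : δ ∈ C' := by
      apply hC'.2.1 δ hδl hδ0
      apply le_antisymm
      · exact csSup_le ⟨_, hC'mem 0⟩ fun y hy => hy.2.le
      · rw [hδdef]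
        apply ciSup_le
        intro n
        exact le_trans (le_of_lt (hxmono n)) (le_csSup hbddδC' (hC'mem n))
    have hx0 : max α ε + 1 ≤ δ := hxle 0
    have hmax : max α ε < max α ε + 1 := by
      rw [Ordinal.add_one_eq_succ]; exact Order.lt_succ _
    have hαδ : α < δ := lt_of_lt_of_le (lt_of_le_of_lt (le_max_left α ε) hmax) hx0
    have hεδ : ε < δ := lt_of_lt_of_le (lt_of_le_of_lt (le_max_right α ε) hmax) hx0
    exact ⟨δ, ⟨⟨hδC, hδC'⟩, hεδ⟩, hαδ⟩

/-- Theorem 3.1(2): if `G*₁ ⊆ Q⁰_λ` is `≤⁰`-directed and `fil(G*₁)` is a weakly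
reasonable (uniform) ultrafilter on `λ`, then `{f_p : p ∈ G*₁}` is a club-dominating
family in `^λλ`; in particular `|G*₁| ≥ 𝔡_{cl(λ)}`. -/
theorem stmt18 (κ : Cardinal) (hreg : κ.IsRegular) (hunc : ℵ₀ < κ)
    (G : Set (Q0 κ.ord))
    (hdir : DirLtOn κ.ord ℵ₀ G (le0 κ.ord))
    (hult : IsUltrafilterOn κ.ord (filG κ.ord G))
    (huni : IsUniformOn κ.ord (filG κ.ord G))
    (hwr : WeaklyReasonable κ.ord (filG κ.ord G)) :
    {f | ∃ p ∈ G, f = fP κ.ord p} ⊆ funSp κ.ord ∧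
    IsClubDominating κ.ord {f | ∃ p ∈ G, f = fP κ.ord p} ∧
    dClubLam κ.ord ≤ #G := by
  obtain ⟨hsubD, hIioD, hemptyD, hupD, hinterD, hcompD⟩ := hult
  have hωl : Ordinal.omega0 < κ.ord := Cardinal.omega0_lt_ord.mpr hunc
  have h1l : (1 : Ordinal) < κ.ord := lt_trans Ordinal.one_lt_omega0 hωl
  have hsucc : ∀ δ : Ordinal, δ < δ + 1 := fun δ => by
    rw [Ordinal.add_one_eq_succ]; exact Order.lt_succ δ
  have hδ1 : ∀ δ, δ < κ.ord → δ + 1 < κ.ord := fun δ hδ => by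
    rw [Ordinal.add_one_eq_succ]; exact (Cardinal.isSuccLimit_ord hreg.aleph0_le).succ_lt hδ
  have part1 : {f | ∃ p ∈ G, f = fP κ.ord p} ⊆ funSp κ.ord := by
    rintro f ⟨p, hpG, rfl⟩ α hα
    exact p.club.1 (fP_mem_C hreg hunc p hα)
  have part2 : IsClubDominating κ.ord {f | ∃ p ∈ G, f = fP κ.ord p} := by
    intro g hg
    set f : Ordinal → Ordinal := fun δ => Ordinal.bsup (δ + 1) (fun a _ => g a) + δ + 1 with hfdef
    have hgb : ∀ δ, g δ ≤ Ordinal.bsup (δ + 1) (fun a _ => g a) := fun δ =>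
      Ordinal.le_bsup _ δ (hsucc δ)
    have hbsup_lt : ∀ δ, δ < κ.ord → Ordinal.bsup (δ + 1) (fun a _ => g a) < κ.ord := by
      intro δ hδ
      apply Ordinal.bsup_lt_ord ?_ (fun j hj => hg j (lt_trans hj (hδ1 δ hδ)))
      rw [hreg.cof_eq]
      exact Cardinal.lt_ord.mp (hδ1 δ hδ)
    have hfl : ∀ δ, δ < κ.ord → f δ < κ.ord := by
      intro δ hδ
      exact add_lt_ord' hreg (add_lt_ord' hreg (hbsup_lt δ hδ) hδ) h1l
    have hfFlam : f ∈ Flam κ.ord := by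
      refine ⟨hfl, ?_, ?_⟩
      · intro a b hab hb
        have h1 : Ordinal.bsup (a + 1) (fun x _ => g x) ≤ Ordinal.bsup (b + 1) (fun x _ => g x) := by
          apply Ordinal.bsup_le
          intro i hi
          exact Ordinal.le_bsup _ i (lt_of_lt_of_le hi (add_le_add_left hab 1))
        exact add_le_add (add_le_add h1 hab) (le_refl 1)
      · intro γ hγ
        refine ⟨γ, hγ, ?_⟩
        calc γ ≤ Ordinal.bsup (γ + 1) (fun a _ => g a) + γ := le_add_self
          _ ≤ f γ := le_self_add
    obtain ⟨C, hCclub, hAD⟩ := hwr f hfFlam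
    set A := ⋃ δ ∈ C, Ico δ (δ + f δ) with hAdef
    have hAsub : A ⊆ Iio κ.ord := by
      rintro x hx
      simp only [hAdef, mem_iUnion, mem_Ico] at hx
      obtain ⟨δ, hδC, hx⟩ := hx
      exact lt_of_lt_of_le hx.2
        (le_of_lt (add_lt_ord' hreg (hCclub.1 hδC) (hfl δ (hCclub.1 hδC))))
    have hBD : Iio κ.ord \ A ∈ filG κ.ord G := by
      rcases hcompD A hAsub with h | h
      · exact absurd h hAD
      · exact h
    obtain ⟨p, hpG, hBfil⟩ : ∃ p ∈ G, Iio κ.ord \ A ∈ fil κ.ord p := by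
      simpa [filG, mem_iUnion] using hBD
    obtain ⟨hBsub, ε, hεl, hB⟩ := hBfil
    refine ⟨fP κ.ord p, ⟨p, hpG, rfl⟩, C ∩ p.C ∩ Ioi ε, club_inter_s18 hreg hunc hCclub p.club hεl, ?_⟩
    rw [eq_empty_iff_forall_notMem]
    rintro β ⟨⟨hβl, hβle⟩, ⟨hβC, hβC'⟩, hβε⟩
    have hd := p.ultra β hβC'
    have hBd : (Iio κ.ord \ A) ∩ Ico β (nxt p.C β) ∈ p.d β := hB β hβC' (le_of_lt hβε)
    have hne : ((Iio κ.ord \ A) ∩ Ico β (nxt p.C β)).Nonempty := by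
      by_contra hcon
      rw [not_nonempty_iff_eq_empty] at hcon
      rw [hcon] at hBd
      exact hd.2.2.1 hBd
    obtain ⟨x, hxB, hxIco⟩ := hne
    have hnxt : β + f β < nxt p.C β := by
      by_contra hcon
      push_neg at hcon
      have hxA : x ∈ A := by
        simp only [hAdef, mem_iUnion, mem_Ico]
        exact ⟨β, hβC, hxIco.1, lt_of_lt_of_le hxIco.2 hcon⟩
      exact hxB.2 hxA
    obtain ⟨j, hjl, hje⟩ := enumC_surj hreg p.club hβC'
    have hj1 : j + 1 < κ.ord := hδ1 j hjl
    have hnxteq : nxt p.C β = enumC p.C (j + 1) := by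
      rw [← hje]; exact nxt_enumC hreg p.club hj1
    have hjβ : j ≤ β := by
      have h := le_enumC hreg p.club j hjl
      rw [hje] at h
      exact h
    have hidx : j + 1 < Ordinal.omega0 * β + Ordinal.omega0 := by
      have h1 : j + 1 ≤ β + 1 := add_le_add_left hjβ 1
      have hβω : β ≤ Ordinal.omega0 * β := by
        calc β = 1 * β := (one_mul β).symm
          _ ≤ Ordinal.omega0 * β := mul_le_mul_left (le_of_lt Ordinal.one_lt_omega0) β
      have h2 : β + 1 < Ordinal.omega0 * β + Ordinal.omega0 := by
        calc β + 1 ≤ Ordinal.omega0 * β + 1 := add_le_add_left hβω 1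
          _ < Ordinal.omega0 * β + Ordinal.omega0 :=
            (add_lt_add_iff_left _).mpr Ordinal.one_lt_omega0
      exact lt_of_le_of_lt h1 h2
    have hlt : enumC p.C (j + 1) < enumC p.C (Ordinal.omega0 * β + Ordinal.omega0) :=
      (enumC_mem hreg p.club _ (omega_mul_add_lt hreg hunc hβl)).2 _ hidx
    have hgf : g β < f β := by
      calc g β ≤ Ordinal.bsup (β + 1) (fun a _ => g a) := hgb β
        _ < f β := lt_of_le_of_lt le_self_add (hsucc _)
    have hfinal : g β < fP κ.ord p β := by
      calc g β < f β := hgf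
        _ ≤ β + f β := le_add_self
        _ < nxt p.C β := hnxt
        _ = enumC p.C (j + 1) := hnxteq
        _ < enumC p.C (Ordinal.omega0 * β + Ordinal.omega0) := hlt
        _ = fP κ.ord p β := (fP_eq hreg hunc p hβl).symm
    exact absurd hβle (not_le.mpr hfinal)
  have himg : {f | ∃ p ∈ G, f = fP κ.ord p} = fP κ.ord '' G := by
    ext f
    simp only [mem_setOf_eq, mem_image]
    constructor
    · rintro ⟨p, hp, rfl⟩; exact ⟨p, hp, rfl⟩
    · rintro ⟨p, hp, rfl⟩; exact ⟨p, hp, rfl⟩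
  refine ⟨part1, part2, ?_⟩
  calc dClubLam κ.ord ≤ #{f | ∃ p ∈ G, f = fP κ.ord p} :=
      csInf_le (OrderBot.bddBelow _) ⟨_, part1, part2, rfl⟩
    _ ≤ #G := by rw [himg]; exact Cardinal.mk_image_le


end Sh830

end
end
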